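/- Let (A, m) be a Noetherian local ring, ℓ ≥ 1, and suppose there exists x ∈ m with (m^{ℓ+1} : x) = m^ℓ. Let J be an ideal with J ⊇ m^ℓ. Then μ(J) ≤ μ(m^ℓ), and equality holds if and only if mJ = xJ + m^{ℓ+1}. -/

import Mathlib

open IsLocalRing

/-- `mu I` is the minimal number of generators of the ideal `I`. -/
noncomputable def mu {A : Type*} [CommRing A] (I : Ideal A) : ℕ :=
  sInf {n | ∃ s : Finset A, s.card = n ∧ Ideal.span (s : Set A) = I}

set_option linter.unusedSectionVars false

universe u


section Length

variable {R M N : Type*} [Ring R] [AddCommGroup M] [Module R M] [AddCommGroup N] [Module R N]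

/-- The length of a module, defined via composition series. -/
noncomputable def len (R M : Type*) [Ring R] [AddCommGroup M] [Module R M] : ℕ :=
  sInf {n | ∃ s : CompositionSeries (Submodule R M), s.head = ⊥ ∧ s.last = ⊤ ∧ s.length = n}

theorem len_eq_length {s : CompositionSeries (Submodule R M)}
    (h1 : s.head = ⊥) (h2 : s.last = ⊤) : len R M = s.length := by
  have hmem : s.length ∈
      {n | ∃ s : CompositionSeries (Submodule R M), s.head = ⊥ ∧ s.last = ⊤ ∧ s.length = n} :=
    ⟨s, h1, h2, rfl⟩
  refine le_antisymm (Nat.sInf_le hmem) (le_csInf ⟨_, hmem⟩ ?_)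
  rintro n ⟨t, ht1, ht2, rfl⟩
  exact ((CompositionSeries.jordan_holder s t (h1.trans ht1.symm) (h2.trans ht2.symm)).length_eq).le

theorem len_spec (R M : Type*) [Ring R] [AddCommGroup M] [Module R M]
    [IsNoetherian R M] [IsArtinian R M] :
    ∃ s : CompositionSeries (Submodule R M), s.head = ⊥ ∧ s.last = ⊤ ∧ s.length = len R M := by
  obtain ⟨s, h1, h2⟩ := exists_compositionSeries_of_isNoetherian_isArtinian R M
  exact ⟨s, h1, h2, (len_eq_length h1 h2).symm⟩

theorem len_le_of_forall {n : ℕ}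
    (h : ∀ s : CompositionSeries (Submodule R M), s.head = ⊥ → s.last = ⊤ → s.length ≤ n) :
    len R M ≤ n := by
  rcases Set.eq_empty_or_nonempty
    {n | ∃ s : CompositionSeries (Submodule R M), s.head = ⊥ ∧ s.last = ⊤ ∧ s.length = n} with he | hne
  · rw [len, he, Nat.sInf_empty]; exact Nat.zero_le n
  · obtain ⟨s, h1, h2, h3⟩ := Nat.sInf_mem hne
    rw [len, ← h3]
    exact h s h1 h2

theorem len_of_subsingleton [Subsingleton M] : len R M = 0 := by
  have hbt : (⊥ : Submodule R M) = ⊤ := by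
    ext y; simp [Subsingleton.elim y 0]
  have := len_eq_length (s := RelSeries.singleton _ (⊥ : Submodule R M))
    (RelSeries.head_singleton _) ((RelSeries.last_singleton _).trans hbt)
  simpa using this

theorem subsingleton_of_len_eq_zero [IsNoetherian R M] [IsArtinian R M]
    (h : len R M = 0) : Subsingleton M := by
  obtain ⟨s, h1, h2, h3⟩ := len_spec R M
  rw [h] at h3
  have hbt : (⊥ : Submodule R M) = ⊤ := by
    rw [← h1, ← h2]
    show s 0 = s (Fin.last s.length)
    congr 1
    ext
    simp [Fin.last, h3]
  have hy : ∀ y : M, y = 0 := fun y => by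
    have : y ∈ (⊥ : Submodule R M) := hbt ▸ Submodule.mem_top
    simpa using this
  exact subsingleton_of_forall_eq 0 fun y => hy y

theorem covBy_of_subtype_covBy {α : Type*} [PartialOrder α] {P : α → Prop} {a b : Subtype P}
    (hP : ∀ z, a.1 ≤ z → z ≤ b.1 → P z) (h : a ⋖ b) : a.1 ⋖ b.1 := by
  refine ⟨by exact_mod_cast h.lt, fun z h1 h2 => ?_⟩
  exact h.2 (c := ⟨z, hP z h1.le h2.le⟩) (by exact_mod_cast h1) (by exact_mod_cast h2)

/-- Map a composition series of submodules along a cover-preserving map. -/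
def CompositionSeries.mapSubmodule (s : CompositionSeries (Submodule R M))
    (f : Submodule R M → Submodule R N) (hf : ∀ {a b}, a ⋖ b → f a ⋖ f b) :
    CompositionSeries (Submodule R N) :=
  ⟨s.length, fun i => f (s i), fun i => hf (s.step i)⟩

theorem covBy_map_subtype (p : Submodule R M) {a b : Submodule R ↥p} (h : a ⋖ b) :
    a.map p.subtype ⋖ b.map p.subtype := by
  have := (apply_covBy_apply_iff (Submodule.MapSubtype.orderIso p)).2 h
  exact covBy_of_subtype_covBy (fun z h1 h2 => le_trans h2 ((Submodule.MapSubtype.orderIso p) b).2) this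

theorem covBy_comap_mkQ (p : Submodule R M) {a b : Submodule R (M ⧸ p)} (h : a ⋖ b) :
    a.comap p.mkQ ⋖ b.comap p.mkQ := by
  have := (apply_covBy_apply_iff (Submodule.comapMkQRelIso p)).2 h
  refine covBy_of_subtype_covBy (fun z h1 h2 => ?_) this
  exact le_trans (Submodule.comapMkQRelIso p a).2 h1

theorem len_congr (e : M ≃ₗ[R] N) : len R M = len R N := by
  unfold len
  congr 1
  ext n
  constructor <;> rintro ⟨s, h1, h2, rfl⟩
  · refine ⟨s.mapSubmodule (Submodule.map (e : M →ₗ[R] N))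
      (fun h => (apply_covBy_apply_iff (Submodule.orderIsoMapComap e)).2 h), ?_, ?_, rfl⟩
    · show Submodule.map _ s.head = ⊥; rw [h1, Submodule.map_bot]
    · show Submodule.map _ s.last = ⊤
      rw [h2, Submodule.map_top, LinearMap.range_eq_top]
      exact e.surjective
  · refine ⟨s.mapSubmodule (Submodule.map (e.symm : N →ₗ[R] M))
      (fun h => (apply_covBy_apply_iff (Submodule.orderIsoMapComap e.symm)).2 h), ?_, ?_, rfl⟩
    · show Submodule.map _ s.head = ⊥; rw [h1, Submodule.map_bot]
    · show Submodule.map _ s.last = ⊤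
      rw [h2, Submodule.map_top, LinearMap.range_eq_top]
      exact e.symm.surjective

theorem len_additive [IsNoetherian R M] [IsArtinian R M] (p : Submodule R M) :
    len R M = len R ↥p + len R (M ⧸ p) := by
  obtain ⟨s, hs1, hs2, hs3⟩ := len_spec R ↥p
  obtain ⟨t, ht1, ht2, ht3⟩ := len_spec R (M ⧸ p)
  set s' := s.mapSubmodule (Submodule.map p.subtype) (fun h => covBy_map_subtype p h) with hs'
  set t' := t.mapSubmodule (Submodule.comap p.mkQ) (fun h => covBy_comap_mkQ p h) with ht'
  have hconn : s'.last = t'.head := by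
    show Submodule.map p.subtype s.last = Submodule.comap p.mkQ t.head
    rw [hs2, ht1, Submodule.map_subtype_top, Submodule.comap_bot, Submodule.ker_mkQ]
  have hh : (s'.smash t' hconn).head = ⊥ := by
    rw [RelSeries.head_smash]
    show Submodule.map p.subtype s.head = ⊥
    rw [hs1, Submodule.map_bot]
  have hl : (s'.smash t' hconn).last = ⊤ := by
    rw [RelSeries.last_smash]
    show Submodule.comap p.mkQ t.last = ⊤
    rw [ht2, Submodule.comap_top]
  have := len_eq_length hh hl
  rw [this]
  show s'.length + t'.length = _
  rw [show s'.length = s.length from rfl, show t'.length = t.length from rfl, hs3, ht3]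

end Length


section Artinian

variable {A : Type u} [CommRing A] [IsLocalRing A]

theorem submodule_eq_bot_or_top_of_cyclic {M : Type u} [AddCommGroup M] [Module A M]
    (hm : maximalIdeal A • (⊤ : Submodule A M) = ⊥) (v : M)
    (hc : ∀ y : M, ∃ a : A, a • v = y) (W : Submodule A M) : W = ⊥ ∨ W = ⊤ := by
  by_cases hW : W = ⊥
  · exact Or.inl hW
  · right
    obtain ⟨w, hwW, hw0⟩ : ∃ w ∈ W, w ≠ (0 : M) := by
      by_contra hcon
      push_neg at hcon
      exact hW (by ext y; simpa using ⟨fun hy => hcon y hy, fun hy => by simp_all⟩)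
    obtain ⟨a, ha⟩ := hc w
    have haU : IsUnit a := by
      by_contra hau
      have : a ∈ maximalIdeal A := hau
      have : w ∈ (⊥ : Submodule A M) := by
        rw [← hm, ← ha]
        exact Submodule.smul_mem_smul this Submodule.mem_top
      exact hw0 (by simpa using this)
    have hvW : v ∈ W := by
      obtain ⟨u, rfl⟩ := haU
      have : (↑u⁻¹ : A) • w ∈ W := W.smul_mem _ hwW
      rwa [← ha, smul_smul, Units.inv_mul, one_smul] at this
    rw [eq_top_iff]
    intro y _
    obtain ⟨b, rfl⟩ := hc y
    exact W.smul_mem _ hvW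

theorem isArtinian_of_eq_bot_or_top {M : Type u} [AddCommGroup M] [Module A M]
    (h : ∀ W : Submodule A M, W = ⊥ ∨ W = ⊤) : IsArtinian A M := by
  have acc_bot : Acc (· < ·) (⊥ : Submodule A M) :=
    ⟨_, fun b hb => absurd hb (by simp)⟩
  refine ⟨⟨fun W => ?_⟩⟩
  rcases h W with rfl | rfl
  · exact acc_bot
  · exact ⟨_, fun b hb => by
      rcases h b with rfl | rfl
      · exact acc_bot
      · exact absurd hb (lt_irrefl _)⟩

theorem isArtinian_of_fg_killed :
    ∀ (n : ℕ) (M : Type u) [AddCommGroup M] [Module A M],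
      maximalIdeal A • (⊤ : Submodule A M) = ⊥ →
      ∀ s : Finset M, s.card ≤ n → Submodule.span A (s : Set M) = ⊤ → IsArtinian A M := by
  intro n
  induction n with
  | zero =>
    intro M _ _ hm s hcard hspan
    have : s = ∅ := Finset.card_eq_zero.mp (Nat.le_zero.mp hcard)
    subst this
    simp only [Finset.coe_empty, Submodule.span_empty] at hspan
    have : Subsingleton M := by
      refine subsingleton_of_forall_eq 0 fun y => ?_
      have : y ∈ (⊥ : Submodule A M) := hspan ▸ Submodule.mem_top
      simpa using this
    exact isArtinian_of_finite
  | succ n ih =>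
    intro M _ _ hm s hcard hspan
    classical
    rcases Finset.eq_empty_or_nonempty s with rfl | ⟨v, hv⟩
    · simp only [Finset.coe_empty, Submodule.span_empty] at hspan
      have : Subsingleton M := by
        refine subsingleton_of_forall_eq 0 fun y => ?_
        have : y ∈ (⊥ : Submodule A M) := hspan ▸ Submodule.mem_top
        simpa using this
      exact isArtinian_of_finite
    · set W : Submodule A M := Submodule.span A {v} with hWdef
      -- W is artinian
      have hWsmul : maximalIdeal A • (⊤ : Submodule A ↥W) = ⊥ := by
        rw [eq_bot_iff]
        intro z hz
        have h1 : W.subtype z ∈ maximalIdeal A • (⊤ : Submodule A M) := by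
          have h2 := Submodule.map_smul'' (maximalIdeal A) (⊤ : Submodule A ↥W) W.subtype
          have h3 : W.subtype z ∈ Submodule.map W.subtype (maximalIdeal A • ⊤) :=
            Submodule.mem_map_of_mem hz
          rw [h2] at h3
          exact Submodule.smul_mono le_rfl le_top h3
        rw [hm] at h1
        have h0 : W.subtype z = 0 := by simpa using h1
        simpa using h0
      haveI hart1 : IsArtinian A ↥W := by
        refine isArtinian_of_eq_bot_or_top (submodule_eq_bot_or_top_of_cyclic hWsmul
          ⟨v, Submodule.mem_span_singleton_self v⟩ (fun y => ?_))
        obtain ⟨a, ha⟩ := Submodule.mem_span_singleton.mp y.2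
        exact ⟨a, Subtype.ext (by simpa using ha)⟩
      -- quotient is artinian
      haveI hart2 : IsArtinian A (M ⧸ W) := by
        refine ih (M ⧸ W) ?_ (Finset.image W.mkQ (s.erase v)) ?_ ?_
        · have : maximalIdeal A • (⊤ : Submodule A (M ⧸ W)) =
              Submodule.map W.mkQ (maximalIdeal A • ⊤) := by
            rw [Submodule.map_smul'']
            congr 1
            rw [Submodule.map_top, Submodule.range_mkQ]
          rw [this, hm, Submodule.map_bot]
        · exact le_trans (Finset.card_image_le) (by rw [Finset.card_erase_of_mem hv]; omega)
        · rw [Finset.coe_image, ← Submodule.map_span]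
          rw [eq_top_iff]
          have h1 : Submodule.span A (s : Set M) ≤
              Submodule.span A ((s.erase v : Finset M) : Set M) ⊔ W := by
            rw [hWdef, ← Submodule.span_union]
            apply Submodule.span_mono
            intro z hz
            rcases eq_or_ne z v with rfl | hzv
            · exact Set.mem_union_right _ rfl
            · exact Set.mem_union_left _ (Finset.mem_coe.mpr (Finset.mem_erase.mpr ⟨hzv, hz⟩))
          calc (⊤ : Submodule A (M ⧸ W)) = Submodule.map W.mkQ ⊤ := by
                rw [Submodule.map_top, Submodule.range_mkQ]
            _ = Submodule.map W.mkQ (Submodule.span A (s : Set M)) := by rw [hspan]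
            _ ≤ Submodule.map W.mkQ (Submodule.span A ((s.erase v : Finset M) : Set M) ⊔ W) :=
                Submodule.map_mono h1
            _ = Submodule.map W.mkQ (Submodule.span A ((s.erase v : Finset M) : Set M)) ⊔
                Submodule.map W.mkQ W := by rw [Submodule.map_sup]
            _ ≤ _ := by
                have hmapW : Submodule.map W.mkQ W = ⊥ :=
                  LinearMap.le_ker_iff_map.mp (le_of_eq (Submodule.ker_mkQ W).symm)
                rw [hmapW]
                simp
      exact isArtinian_of_range_eq_ker W.subtype W.mkQ
        (by rw [Submodule.range_subtype, Submodule.ker_mkQ])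

theorem isArtinian_of_pow_killed :
    ∀ (n : ℕ) (M : Type u) [AddCommGroup M] [Module A M] [IsNoetherian A M],
      (maximalIdeal A) ^ n • (⊤ : Submodule A M) = ⊥ → IsArtinian A M := by
  intro n
  induction n with
  | zero =>
    intro M _ _ _ hm
    rw [pow_zero, Ideal.one_eq_top, Submodule.top_smul] at hm
    have : Subsingleton M := by
      refine subsingleton_of_forall_eq 0 fun y => ?_
      have : y ∈ (⊥ : Submodule A M) := hm ▸ Submodule.mem_top
      simpa using this
    exact isArtinian_of_finite
  | succ n ih =>
    intro M _ _ _ hm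
    set W : Submodule A M := (maximalIdeal A) ^ n • ⊤ with hWdef
    haveI hart2 : IsArtinian A (M ⧸ W) := by
      refine ih (M ⧸ W) ?_
      have : (maximalIdeal A) ^ n • (⊤ : Submodule A (M ⧸ W)) =
          Submodule.map W.mkQ ((maximalIdeal A) ^ n • ⊤) := by
        rw [Submodule.map_smul'']
        congr 1
        rw [Submodule.map_top, Submodule.range_mkQ]
      have hmapW : Submodule.map W.mkQ W = ⊥ :=
        LinearMap.le_ker_iff_map.mp (le_of_eq (Submodule.ker_mkQ W).symm)
      rw [this, ← hWdef, hmapW]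
    haveI hart1 : IsArtinian A ↥W := by
      have hWsmul : maximalIdeal A • (⊤ : Submodule A ↥W) = ⊥ := by
        rw [eq_bot_iff]
        intro z hz
        have hz' : W.subtype z ∈ maximalIdeal A • W := by
          have := Submodule.map_smul'' (maximalIdeal A) (⊤ : Submodule A ↥W) W.subtype
          rw [show Submodule.map W.subtype ⊤ = W from Submodule.map_subtype_top W] at this
          rw [← this]
          exact Submodule.mem_map_of_mem hz
        have : maximalIdeal A • W = ⊥ := by
          rw [hWdef, ← Submodule.smul_assoc, Ideal.smul_eq_mul, ← pow_succ']
          exact hm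
        rw [this] at hz'
        have h0 : W.subtype z = 0 := by simpa using hz'
        simpa using h0
      obtain ⟨sW, hsW⟩ := (Submodule.fg_top W).mpr (IsNoetherian.noetherian W)
      exact isArtinian_of_fg_killed sW.card ↥W hWsmul sW le_rfl hsW
    exact isArtinian_of_range_eq_ker W.subtype W.mkQ
      (by rw [Submodule.range_subtype, Submodule.ker_mkQ])

end Artinian

section Lenq

variable {A : Type u} [CommRing A] [IsNoetherianRing A] [IsLocalRing A]

/-- The length of `P/N` for ideals `N ≤ P`. -/
noncomputable def lenq (N P : Ideal A) : ℕ :=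
  len A (↥P ⧸ (Submodule.comap P.subtype N))

theorem smul_top_quot_eq_bot {N P : Ideal A} (Q : Ideal A) (h : Q * P ≤ N) :
    Q • (⊤ : Submodule A (↥P ⧸ (Submodule.comap P.subtype N))) = ⊥ := by
  have h1 : Q • (⊤ : Submodule A ↥P) ≤ Submodule.comap P.subtype N := by
    intro z hz
    have h2 := Submodule.map_smul'' Q (⊤ : Submodule A ↥P) P.subtype
    rw [Submodule.map_subtype_top] at h2
    have h3 : P.subtype z ∈ Q • (P : Submodule A A) := by
      rw [← h2]; exact Submodule.mem_map_of_mem hz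
    have h4 : P.subtype z ∈ N := h ((Ideal.smul_eq_mul Q P) ▸ h3)
    exact h4
  have htop : (⊤ : Submodule A (↥P ⧸ (Submodule.comap P.subtype N))) =
      Submodule.map (Submodule.comap P.subtype N).mkQ ⊤ := by
    rw [Submodule.map_top, Submodule.range_mkQ]
  rw [htop, ← Submodule.map_smul'']
  exact LinearMap.le_ker_iff_map.mp
    (le_trans h1 (le_of_eq (Submodule.ker_mkQ _).symm))

theorem artinian_lenq (n : ℕ) {N P : Ideal A} (hn : maximalIdeal A ^ n ≤ N) :
    IsArtinian A (↥P ⧸ (Submodule.comap P.subtype N)) :=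
  isArtinian_of_pow_killed n _
    (smul_top_quot_eq_bot _ (le_trans Ideal.mul_le_left hn))

theorem lenq_additive (n : ℕ) {Nq N P : Ideal A} (hn : maximalIdeal A ^ n ≤ Nq)
    (h1 : Nq ≤ N) (h2 : N ≤ P) :
    lenq Nq P = lenq N P + lenq Nq N := by
  haveI := artinian_lenq (P := P) n hn
  set C : Submodule A ↥P := Submodule.comap P.subtype Nq with hC
  set D : Submodule A ↥P := Submodule.comap P.subtype N with hD
  have hCD : C ≤ D := Submodule.comap_mono h1
  set N' : Submodule A (↥P ⧸ C) := Submodule.map C.mkQ D with hN'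
  have hadd := len_additive (R := A) (M := ↥P ⧸ C) N'
  have e2 : ((↥P ⧸ C) ⧸ N') ≃ₗ[A] (↥P ⧸ D) :=
    Submodule.quotientQuotientEquivQuotient C D hCD
  set g : ↥N →ₗ[A] (↥P ⧸ C) := C.mkQ ∘ₗ Submodule.inclusion h2 with hg
  have hker : LinearMap.ker g = Submodule.comap N.subtype Nq := by
    ext z
    simp only [hg, LinearMap.mem_ker, LinearMap.comp_apply, Submodule.mem_comap]
    rw [Submodule.mkQ_apply, Submodule.Quotient.mk_eq_zero]
    simp [hC, Submodule.mem_comap, Submodule.subtype_apply, Submodule.coe_inclusion]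
  have hrange : LinearMap.range g = N' := by
    rw [hg, LinearMap.range_comp, Submodule.range_inclusion]
  have e1 : (↥N ⧸ Submodule.comap N.subtype Nq) ≃ₗ[A] ↥N' := by
    rw [← hker, ← hrange]
    exact g.quotKerEquivRange
  show len A (↥P ⧸ C) = len A (↥P ⧸ D) + len A (↥N ⧸ Submodule.comap N.subtype Nq)
  rw [hadd, len_congr e1, len_congr e2, Nat.add_comm]

theorem lenq_eq_zero_iff (n : ℕ) {N P : Ideal A} (hn : maximalIdeal A ^ n ≤ N) :
    lenq N P = 0 ↔ P ≤ N := by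
  haveI := artinian_lenq (P := P) n hn
  constructor
  · intro h0
    haveI := subsingleton_of_len_eq_zero h0
    have := Submodule.Quotient.subsingleton_iff.mp this
    exact Submodule.comap_subtype_eq_top.mp this
  · intro hPN
    haveI : Subsingleton (↥P ⧸ (Submodule.comap P.subtype N)) :=
      Submodule.Quotient.subsingleton_iff.mpr (Submodule.comap_subtype_eq_top.mpr hPN)
    exact len_of_subsingleton

end Lenq

section Main
variable {A : Type u} [CommRing A] [IsNoetherianRing A] [IsLocalRing A]

theorem lenq_theta {I q J : Ideal A} (x : A)
    (hcolon : q.colon (Ideal.span {x}) = I) :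
    lenq I J = lenq q (Ideal.span {x} * J ⊔ q) := by
  set K := Ideal.span {x} * J ⊔ q with hK
  set α : ↥J →ₗ[A] (A ⧸ q) := q.mkQ ∘ₗ ((LinearMap.lsmul A A x) ∘ₗ J.subtype) with hα
  have hkerα : LinearMap.ker α = Submodule.comap J.subtype I := by
    ext z
    simp only [hα, LinearMap.mem_ker, LinearMap.comp_apply, Submodule.mem_comap,
      LinearMap.lsmul_apply, Submodule.subtype_apply, Submodule.mkQ_apply,
      Submodule.Quotient.mk_eq_zero]
    rw [← hcolon, Ideal.mem_colon_span_singleton, smul_eq_mul, mul_comm]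
  have hrangeα : LinearMap.range α = Submodule.map q.mkQ K := by
    rw [hα, LinearMap.range_comp, LinearMap.range_comp, Submodule.range_subtype]
    have h1 : Submodule.map (LinearMap.lsmul A A x) J = Ideal.span {x} * J := by
      ext y
      simp only [Submodule.mem_map, LinearMap.lsmul_apply, smul_eq_mul]
      rw [Ideal.mem_span_singleton_mul]
    have h2 : Submodule.map q.mkQ q = ⊥ :=
      LinearMap.le_ker_iff_map.mp (le_of_eq (Submodule.ker_mkQ q).symm)
    rw [h1, hK, Submodule.map_sup, h2, sup_bot_eq]
  set β : ↥K →ₗ[A] (A ⧸ q) := q.mkQ ∘ₗ K.subtype with hβ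
  have hkerβ : LinearMap.ker β = Submodule.comap K.subtype q := by
    rw [hβ, LinearMap.ker_comp, Submodule.ker_mkQ]
  have hrangeβ : LinearMap.range β = Submodule.map q.mkQ K := by
    rw [hβ, LinearMap.range_comp, Submodule.range_subtype]
  have e : (↥J ⧸ Submodule.comap J.subtype I) ≃ₗ[A]
      (↥K ⧸ Submodule.comap K.subtype q) := by
    rw [← hkerα, ← hkerβ]
    exact (α.quotKerEquivRange.trans
      (LinearEquiv.ofEq _ _ (hrangeα.trans hrangeβ.symm))).trans β.quotKerEquivRange.symm
  exact len_congr e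

theorem exists_finset_card_le_len_span (M : Type u) [AddCommGroup M] [Module A M]
    [IsNoetherian A M] [IsArtinian A M] :
    ∃ t : Finset M, t.card ≤ len A M ∧ Submodule.span A (t : Set M) = ⊤ := by
  classical
  obtain ⟨s, h1, h2, h3⟩ := len_spec A M
  have key : ∀ k, ∀ hk : k < s.length + 1,
      ∃ t : Finset M, t.card ≤ k ∧ Submodule.span A (t : Set M) = s.toFun ⟨k, hk⟩ := by
    intro k
    induction k with
    | zero =>
      intro hk
      refine ⟨∅, le_rfl, ?_⟩
      have h0 : s.toFun ⟨0, hk⟩ = s.head := by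
        show _ = s.toFun 0
        congr 1
      rw [h0, h1]
      simp
    | succ k ih =>
      intro hk
      have hk' : k < s.length + 1 := by omega
      obtain ⟨t, htc, hts⟩ := ih hk'
      have hcov : s.toFun ⟨k, hk'⟩ ⋖ s.toFun ⟨k + 1, hk⟩ := by
        have hstep : s.toFun (Fin.castSucc ⟨k, by omega⟩) ⋖ s.toFun (Fin.succ ⟨k, by omega⟩) :=
          s.step _
        convert hstep using 2 <;> (ext; simp [Fin.castSucc, Fin.succ, Fin.castAdd, Fin.castLE])
      obtain ⟨v, hv1, hv2⟩ := SetLike.exists_of_lt hcov.lt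
      refine ⟨insert v t, le_trans (Finset.card_insert_le _ _) (by omega), ?_⟩
      rw [Finset.coe_insert, Submodule.span_insert, hts]
      have hle : Submodule.span A {v} ⊔ s.toFun ⟨k, hk'⟩ ≤ s.toFun ⟨k + 1, hk⟩ :=
        sup_le ((Submodule.span_singleton_le_iff_mem v _).mpr hv1) hcov.lt.le
      have hvmem : v ∈ Submodule.span A {v} ⊔ s.toFun ⟨k, hk'⟩ :=
        (le_sup_left : Submodule.span A {v} ≤ _) (Submodule.mem_span_singleton_self v)
      have hlt : s.toFun ⟨k, hk'⟩ < Submodule.span A {v} ⊔ s.toFun ⟨k, hk'⟩ := by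
        refine lt_of_le_of_ne le_sup_right fun hEq => hv2 ?_
        rw [hEq]
        exact hvmem
      rcases lt_or_eq_of_le hle with hlt2 | hEq
      · exact absurd hlt2 (hcov.2 hlt)
      · exact hEq
  obtain ⟨t, htc, hts⟩ := key s.length (by omega)
  refine ⟨t, by omega, ?_⟩
  have hlast : s.toFun ⟨s.length, by omega⟩ = s.last := by
    show _ = s.toFun (Fin.last _)
    congr 1
  rw [hts, hlast, h2]

theorem len_le_one_of_eq_bot_or_top {M : Type u} [AddCommGroup M] [Module A M]
    (h : ∀ W : Submodule A M, W = ⊥ ∨ W = ⊤) : len A M ≤ 1 := by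
  refine len_le_of_forall fun s hh hl => ?_
  by_contra hlen
  push_neg at hlen
  have h1lt : (1 : ℕ) < s.length + 1 := by omega
  have hlt1 : s.head < s.toFun ⟨1, h1lt⟩ := by
    apply s.strictMono
    show (0 : Fin (s.length + 1)) < ⟨1, h1lt⟩
    rw [Fin.lt_def]
    simp
  have hlt2 : s.toFun ⟨1, h1lt⟩ < s.last := by
    apply s.strictMono
    show (⟨1, h1lt⟩ : Fin (s.length + 1)) < Fin.last _
    rw [Fin.lt_def]
    simp [Fin.last]
    omega
  rcases h (s.toFun ⟨1, h1lt⟩) with hEq | hEq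
  · rw [hh, hEq] at hlt1
    exact absurd hlt1 (lt_irrefl _)
  · rw [hl, hEq] at hlt2
    exact absurd hlt2 (lt_irrefl _)

theorem len_le_of_span_finset :
    ∀ (n : ℕ) (M : Type u) [AddCommGroup M] [Module A M] [IsNoetherian A M],
      maximalIdeal A • (⊤ : Submodule A M) = ⊥ →
      ∀ t : Finset M, t.card ≤ n → Submodule.span A (t : Set M) = ⊤ → len A M ≤ n := by
  intro n
  induction n with
  | zero =>
    intro M _ _ _ hm t hcard hspan
    have : t = ∅ := Finset.card_eq_zero.mp (Nat.le_zero.mp hcard)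
    subst this
    simp only [Finset.coe_empty, Submodule.span_empty] at hspan
    haveI : Subsingleton M := by
      refine subsingleton_of_forall_eq 0 fun y => ?_
      have : y ∈ (⊥ : Submodule A M) := hspan ▸ Submodule.mem_top
      simpa using this
    simp [len_of_subsingleton]
  | succ n ih =>
    intro M _ _ _ hm t hcard hspan
    classical
    rcases Finset.eq_empty_or_nonempty t with rfl | ⟨v, hv⟩
    · simp only [Finset.coe_empty, Submodule.span_empty] at hspan
      haveI : Subsingleton M := by
        refine subsingleton_of_forall_eq 0 fun y => ?_
        have : y ∈ (⊥ : Submodule A M) := hspan ▸ Submodule.mem_top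
        simpa using this
      simp [len_of_subsingleton]
    · set W : Submodule A M := Submodule.span A {v} with hWdef
      haveI hartM : IsArtinian A M := isArtinian_of_fg_killed t.card M hm t le_rfl hspan
      have hWsmul : maximalIdeal A • (⊤ : Submodule A ↥W) = ⊥ := by
        rw [eq_bot_iff]
        intro z hz
        have h1 : W.subtype z ∈ maximalIdeal A • (⊤ : Submodule A M) := by
          have h2 := Submodule.map_smul'' (maximalIdeal A) (⊤ : Submodule A ↥W) W.subtype
          have h3 : W.subtype z ∈ Submodule.map W.subtype (maximalIdeal A • ⊤) :=
            Submodule.mem_map_of_mem hz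
          rw [h2] at h3
          exact Submodule.smul_mono le_rfl le_top h3
        rw [hm] at h1
        have h0 : W.subtype z = 0 := by simpa using h1
        simpa using h0
      have hW1 : len A ↥W ≤ 1 := by
        refine len_le_one_of_eq_bot_or_top (submodule_eq_bot_or_top_of_cyclic hWsmul
          ⟨v, Submodule.mem_span_singleton_self v⟩ (fun y => ?_))
        obtain ⟨a, ha⟩ := Submodule.mem_span_singleton.mp y.2
        exact ⟨a, Subtype.ext (by simpa using ha)⟩
      have hQ : len A (M ⧸ W) ≤ n := by
        refine ih (M ⧸ W) ?_ (Finset.image W.mkQ (t.erase v)) ?_ ?_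
        · have hh : maximalIdeal A • (⊤ : Submodule A (M ⧸ W)) =
              Submodule.map W.mkQ (maximalIdeal A • ⊤) := by
            rw [Submodule.map_smul'']
            congr 1
            rw [Submodule.map_top, Submodule.range_mkQ]
          rw [hh, hm, Submodule.map_bot]
        · exact le_trans (Finset.card_image_le) (by rw [Finset.card_erase_of_mem hv]; omega)
        · rw [Finset.coe_image, ← Submodule.map_span, eq_top_iff]
          have h1 : Submodule.span A (t : Set M) ≤
              Submodule.span A ((t.erase v : Finset M) : Set M) ⊔ W := by
            rw [hWdef, ← Submodule.span_union]
            apply Submodule.span_mono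
            intro z hz
            rcases eq_or_ne z v with rfl | hzv
            · exact Set.mem_union_right _ rfl
            · exact Set.mem_union_left _ (Finset.mem_coe.mpr (Finset.mem_erase.mpr ⟨hzv, hz⟩))
          have hmapW : Submodule.map W.mkQ W = ⊥ :=
            LinearMap.le_ker_iff_map.mp (le_of_eq (Submodule.ker_mkQ W).symm)
          calc (⊤ : Submodule A (M ⧸ W)) = Submodule.map W.mkQ ⊤ := by
                rw [Submodule.map_top, Submodule.range_mkQ]
            _ = Submodule.map W.mkQ (Submodule.span A (t : Set M)) := by rw [hspan]
            _ ≤ Submodule.map W.mkQ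
                (Submodule.span A ((t.erase v : Finset M) : Set M) ⊔ W) :=
                Submodule.map_mono h1
            _ = Submodule.map W.mkQ (Submodule.span A ((t.erase v : Finset M) : Set M)) ⊔
                Submodule.map W.mkQ W := by rw [Submodule.map_sup]
            _ ≤ _ := by rw [hmapW]; simp
      have := len_additive (R := A) (M := M) W
      omega

theorem mu_le_lenq (N : Ideal A) : mu N ≤ lenq (maximalIdeal A * N) N := by
  classical
  set C : Submodule A ↥N := Submodule.comap N.subtype (maximalIdeal A * N) with hC
  haveI hart : IsArtinian A (↥N ⧸ C) :=
    isArtinian_of_pow_killed 1 (↥N ⧸ C) (by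
      rw [pow_one]
      exact smul_top_quot_eq_bot _ le_rfl)
  obtain ⟨T, hTc, hTs⟩ := exists_finset_card_le_len_span (A := A) (↥N ⧸ C)
  have hsurj : Function.Surjective C.mkQ := Submodule.mkQ_surjective C
  set f : (↥N ⧸ C) → ↥N := fun y => Classical.choose (hsurj y) with hf
  have hfspec : ∀ y, C.mkQ (f y) = y := fun y => Classical.choose_spec (hsurj y)
  set τ : Finset A := T.image (fun y => ((f y : ↥N) : A)) with hτ
  have hτle : Submodule.span A (τ : Set A) ≤ N := by
    rw [Submodule.span_le]
    intro a ha
    simp only [hτ, Finset.coe_image, Set.mem_image, Finset.mem_coe] at ha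
    obtain ⟨y, _, rfl⟩ := ha
    exact (f y).2
  set σ : Finset ↥N := T.image f with hσ
  have hmap : Submodule.map C.mkQ (Submodule.span A (σ : Set ↥N)) = ⊤ := by
    rw [Submodule.map_span, hσ, Finset.coe_image, Set.image_image]
    have : (fun y => C.mkQ (f y)) '' (T : Set (↥N ⧸ C)) = (T : Set (↥N ⧸ C)) := by
      simp only [hfspec, Set.image_id']
    rw [this, hTs]
  have hsup : C ⊔ Submodule.span A (σ : Set ↥N) = ⊤ :=
    (Submodule.map_mkQ_eq_top C _).mp hmap
  have hNle : N ≤ Submodule.span A (τ : Set A) ⊔ maximalIdeal A • N := by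
    have hmap2 := congrArg (Submodule.map N.subtype) hsup
    rw [Submodule.map_sup, Submodule.map_span, Submodule.map_subtype_top, hC,
      Submodule.map_comap_subtype] at hmap2
    have himg : N.subtype '' (σ : Set ↥N) = (τ : Set A) := by
      rw [hσ, hτ, Finset.coe_image, Finset.coe_image, Set.image_image]
      rfl
    rw [himg] at hmap2
    have hinf : N ⊓ maximalIdeal A * N = maximalIdeal A * N :=
      inf_eq_right.mpr Ideal.mul_le_right
    rw [hinf] at hmap2
    rw [Ideal.smul_eq_mul]
    conv_lhs => rw [← hmap2]
    exact sup_le le_sup_right le_sup_left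
  have hNak := Submodule.le_of_le_smul_of_le_jacobson_bot
    (IsNoetherian.noetherian N) (IsLocalRing.maximalIdeal_le_jacobson ⊥) hNle
  have hspanτ : Ideal.span (τ : Set A) = N := le_antisymm hτle hNak
  have h1 : mu N ≤ τ.card := Nat.sInf_le ⟨τ, rfl, hspanτ⟩
  calc mu N ≤ τ.card := h1
    _ ≤ T.card := Finset.card_image_le
    _ ≤ len A (↥N ⧸ C) := hTc
    _ = lenq (maximalIdeal A * N) N := rfl

theorem lenq_le_mu (N : Ideal A) : lenq (maximalIdeal A * N) N ≤ mu N := by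
  classical
  set C : Submodule A ↥N := Submodule.comap N.subtype (maximalIdeal A * N) with hC
  have hne : {n | ∃ s : Finset A, s.card = n ∧ Ideal.span (s : Set A) = N}.Nonempty := by
    obtain ⟨S, hS⟩ := (IsNoetherian.noetherian N : N.FG)
    exact ⟨S.card, S, rfl, hS⟩
  obtain ⟨s₀, hs₀c, hs₀⟩ := Nat.sInf_mem hne
  have hmem : ∀ a ∈ s₀, a ∈ N := fun a ha => hs₀ ▸ Ideal.subset_span ha
  set σ : Finset ↥N := s₀.attach.image (fun a => (⟨a.1, hmem a.1 a.2⟩ : ↥N)) with hσ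
  have hσspan : Submodule.span A (σ : Set ↥N) = ⊤ := by
    apply Submodule.map_injective_of_injective (Submodule.injective_subtype N)
    rw [Submodule.map_span, Submodule.map_subtype_top]
    have himg : N.subtype '' (σ : Set ↥N) = (s₀ : Set A) := by
      ext a
      simp only [hσ, Finset.coe_image, Set.mem_image, Finset.mem_coe, Finset.mem_attach,
        Submodule.subtype_apply, true_and]
      constructor
      · rintro ⟨z, ⟨b, rfl⟩, rfl⟩
        exact b.2
      · intro ha
        exact ⟨⟨a, hmem a ha⟩, ⟨⟨a, ha⟩, rfl⟩, rfl⟩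
    rw [himg, Ideal.submodule_span_eq, hs₀]
  have hkilled : maximalIdeal A • (⊤ : Submodule A (↥N ⧸ C)) = ⊥ :=
    smul_top_quot_eq_bot _ le_rfl
  set T : Finset (↥N ⧸ C) := σ.image C.mkQ with hT
  have hTspan : Submodule.span A (T : Set (↥N ⧸ C)) = ⊤ := by
    rw [hT, Finset.coe_image, ← Submodule.map_span, hσspan, Submodule.map_top,
      Submodule.range_mkQ]
  have hcard : T.card ≤ mu N := by
    calc T.card ≤ σ.card := Finset.card_image_le
      _ ≤ s₀.attach.card := Finset.card_image_le
      _ = s₀.card := Finset.card_attach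
      _ = mu N := hs₀c
  exact len_le_of_span_finset (mu N) (↥N ⧸ C) hkilled T hcard hTspan

theorem mu_eq_lenq (N : Ideal A) : mu N = lenq (maximalIdeal A * N) N :=
  le_antisymm (mu_le_lenq N) (lenq_le_mu N)

end Main


/-- If `(m^{ℓ+1} : x) = m^ℓ` for some `x ∈ m`, then every ideal `J ⊇ m^ℓ` satisfies
`μ(J) ≤ μ(m^ℓ)`, with equality iff `mJ = xJ + m^{ℓ+1}`. -/
theorem stmt7 {A : Type*} [CommRing A] [IsNoetherianRing A] [IsLocalRing A]
    (ℓ : ℕ) (hℓ : 1 ≤ ℓ) (x : A) (hx : x ∈ maximalIdeal A)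
    (hcolon : (maximalIdeal A ^ (ℓ + 1)).colon (Ideal.span {x}) = maximalIdeal A ^ ℓ)
    (J : Ideal A) (hJ : maximalIdeal A ^ ℓ ≤ J) :
    mu J ≤ mu (maximalIdeal A ^ ℓ) ∧
    (mu J = mu (maximalIdeal A ^ ℓ) ↔
      maximalIdeal A * J = Ideal.span {x} * J ⊔ maximalIdeal A ^ (ℓ + 1)) := by
  set m := maximalIdeal A with hm
  set I := m ^ ℓ with hI
  set q := m ^ (ℓ + 1) with hq
  set K := Ideal.span {x} * J ⊔ q with hK
  have hqmI : q = m * I := by rw [hq, hI, pow_succ']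
  have hqI : q ≤ I := hqmI ▸ Ideal.mul_le_right
  have hqmJ : q ≤ m * J := hqmI ▸ Ideal.mul_mono le_rfl hJ
  have hKmJ : K ≤ m * J := sup_le
    (Ideal.mul_mono ((Ideal.span_singleton_le_iff_mem _).mpr hx) le_rfl) hqmJ
  have hmJJ : m * J ≤ J := Ideal.mul_le_right
  have hqle : m ^ (ℓ + 1) ≤ q := le_of_eq hq.symm
  have A1 : lenq q J = lenq (m * J) J + lenq q (m * J) :=
    lenq_additive (ℓ + 1) hqle hqmJ hmJJ
  have A2 : lenq q J = lenq I J + lenq q I :=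
    lenq_additive (ℓ + 1) hqle hqI hJ
  have A3 : lenq I J = lenq q K := lenq_theta x hcolon
  have A4 : lenq q (m * J) = lenq K (m * J) + lenq q K :=
    lenq_additive (ℓ + 1) hqle le_sup_right hKmJ
  have hmuJ : mu J = lenq (m * J) J := mu_eq_lenq J
  have hmuI : mu I = lenq q I := by rw [mu_eq_lenq I, ← hqmI]
  have key : mu J + lenq K (m * J) = mu I := by omega
  have hzero : lenq K (m * J) = 0 ↔ m * J ≤ K :=
    lenq_eq_zero_iff (ℓ + 1) (le_trans hqle le_sup_right)
  constructor
  · omega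
  · constructor
    · intro hEq
      have h0 : lenq K (m * J) = 0 := by omega
      exact le_antisymm (hzero.mp h0) hKmJ
    · intro hEq
      have h0 : lenq K (m * J) = 0 := hzero.mpr (le_of_eq hEq)
      omega
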